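/- Let α ≥ 1 be a real number, let S be a set of positive integers (0 ∉ S), and let N be a positive integer. Then ∏_{p ∈ P(S), p ≤ N} 1/(1 - p^{-1/α}) ≥ ∑_{s ∈ S, s ≤ N} s^{-1/α}, where the product is over the (finitely many) primes p ≤ N belonging to P(S). -/
import Mathlib

/-- The set of prime factors of elements of `S`. -/
def PrimeFactors (S : Set ℕ) : Set ℕ :=
  {p | p.Prime ∧ ∃ s ∈ S, p ∣ s}

/-- `π_S(n)`: the number of elements of `PrimeFactors S` that are `≤ n`. -/
noncomputable def primesCount (S : Set ℕ) (n : ℕ) : ℕ :=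
  ({p ∈ PrimeFactors S | p ≤ n}).ncard

/-- `S` is a set of positive integers of polynomial density `α`:
`0 ∉ S` and there is `K > 0` with `card {s ∈ S : s ≤ n} ≥ K * n^(1/α)` for all `n ≥ 1`. -/
def HasPolyDensity (S : Set ℕ) (α : ℝ) : Prop :=
  0 ∉ S ∧ ∃ K : ℝ, 0 < K ∧ ∀ n : ℕ, 0 < n →
    K * (n : ℝ) ^ (1 / α) ≤ ({s ∈ S | s ≤ n}).ncard
theorem partialProd_ge_partialSum (α : ℝ) (hα : 1 ≤ α) (S : Set ℕ) (hS : 0 ∉ S)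
    (N : ℕ) (hN : 0 < N) :
    ∑ s ∈ Finset.range (N + 1), Set.indicator S (fun s : ℕ => (s : ℝ) ^ (-(1 / α))) s
      ≤ ∏ p ∈ Finset.range (N + 1),
          Set.mulIndicator (PrimeFactors S)
            (fun p : ℕ => 1 / (1 - (p : ℝ) ^ (-(1 / α)))) p := by
  classical
  have hα0 : (0 : ℝ) < α := lt_of_lt_of_le one_pos hα
  have hcneg : -(1 / α) < 0 := by
    have : (0 : ℝ) < 1 / α := by positivity
    linarith
  set c : ℝ := -(1 / α) with hcdef
  set P : Finset ℕ := (Finset.range (N + 1)).filter (· ∈ PrimeFactors S) with hP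
  set T : Finset ℕ := (Finset.range (N + 1)).filter (· ∈ S) with hT
  have hsum : ∑ s ∈ Finset.range (N + 1),
      Set.indicator S (fun s : ℕ => (s : ℝ) ^ c) s = ∑ s ∈ T, (s : ℝ) ^ c := by
    rw [hT, Finset.sum_filter]
    exact Finset.sum_congr rfl fun s _ => Set.indicator_apply _ _ _
  have hprod : ∏ p ∈ Finset.range (N + 1),
      Set.mulIndicator (PrimeFactors S) (fun p : ℕ => 1 / (1 - (p : ℝ) ^ c)) p
        = ∏ p ∈ P, 1 / (1 - (p : ℝ) ^ c) := by
    rw [hP, Finset.prod_filter]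
    exact Finset.prod_congr rfl fun p _ => Set.mulIndicator_apply _ _ _
  rw [hsum, hprod]
  -- basic facts about elements of `T`
  have hTne : ∀ s ∈ T, s ≠ 0 := by
    intro s hs h0
    exact hS (h0 ▸ (Finset.mem_filter.mp hs).2)
  -- product identity over `P`
  have hprodid : ∀ s ∈ T, ∏ p ∈ P, p ^ s.factorization p = s := by
    intro s hs
    have hs0 : s ≠ 0 := hTne s hs
    have hsS : s ∈ S := (Finset.mem_filter.mp hs).2
    have hsN : s < N + 1 := Finset.mem_range.mp (Finset.mem_filter.mp hs).1
    have hsub : s.primeFactors ⊆ P := by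
      intro p hp
      rw [Nat.mem_primeFactors] at hp
      refine Finset.mem_filter.mpr ⟨Finset.mem_range.mpr ?_, hp.1, s, hsS, hp.2.1⟩
      have := Nat.le_of_dvd (Nat.pos_of_ne_zero hs0) hp.2.1
      omega
    have h1 : ∏ p ∈ s.primeFactors, p ^ s.factorization p = s := by
      have := Nat.factorization_prod_pow_eq_self hs0
      rwa [Finsupp.prod, Nat.support_factorization] at this
    have h2 := Finset.prod_subset (f := fun p => p ^ s.factorization p) hsub
      (fun p _ hp => by
        show p ^ s.factorization p = 1
        rw [show s.factorization p = 0 from Finsupp.notMem_support_iff.mp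
          (by rw [Nat.support_factorization]; exact hp), pow_zero])
    rw [h2] at h1
    exact h1
  -- the map from elements of `T` to exponent vectors
  set φ : ℕ → (∀ a, a ∈ P → ℕ) := fun s a _ => s.factorization a with hφ
  have hinj : ∀ s ∈ T, ∀ s' ∈ T, φ s = φ s' → s = s' := by
    intro s hs s' hs' h
    have : ∏ p ∈ P, p ^ s.factorization p = ∏ p ∈ P, p ^ s'.factorization p :=
      Finset.prod_congr rfl fun p hp => by
        rw [show s.factorization p = s'.factorization p from congrFun (congrFun h p) hp]
    rw [hprodid s hs, hprodid s' hs'] at this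
    exact this
  have key : ∀ s ∈ T, ∏ x ∈ P.attach, (((x : ℕ) : ℝ) ^ c) ^ (s.factorization x)
      = (s : ℝ) ^ c := by
    intro s hs
    have h1 : ∀ x : {x // x ∈ P}, (((x : ℕ) : ℝ) ^ c) ^ (s.factorization x)
        = ((((x : ℕ) ^ s.factorization (x : ℕ) : ℕ) : ℝ)) ^ c := by
      intro x
      rw [← Real.rpow_natCast (((x : ℕ) : ℝ) ^ c) (s.factorization x),
        ← Real.rpow_mul (Nat.cast_nonneg _)]
      push_cast
      rw [← Real.rpow_natCast ((x : ℕ) : ℝ) (s.factorization x),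
        ← Real.rpow_mul (Nat.cast_nonneg _), mul_comm]
    rw [Finset.prod_congr rfl fun x _ => h1 x,
      Real.finset_prod_rpow _ _ (fun _ _ => Nat.cast_nonneg _) c]
    rw [← Nat.cast_prod, Finset.prod_attach P (fun p => p ^ s.factorization p),
      hprodid s hs]
  calc ∑ s ∈ T, (s : ℝ) ^ c
      ≤ ∏ p ∈ P, ∑ k ∈ Finset.range (N + 1), (((p : ℕ) : ℝ) ^ c) ^ k := by
        rw [Finset.prod_sum]
        have himg : ∑ s ∈ T, (s : ℝ) ^ c
            = ∑ g ∈ T.image φ, ∏ x ∈ P.attach, (((x : ℕ) : ℝ) ^ c) ^ (g x x.2) := by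
          rw [Finset.sum_image hinj]
          exact (Finset.sum_congr rfl fun s hs => key s hs).symm
        rw [himg]
        refine Finset.sum_le_sum_of_subset_of_nonneg ?_ ?_
        · intro g hg
          obtain ⟨s, hs, rfl⟩ := Finset.mem_image.mp hg
          rw [Finset.mem_pi]
          intro a ha
          rw [Finset.mem_range]
          show s.factorization a < N + 1
          have h1 := Nat.factorization_lt a (hTne s hs)
          have h2 : s < N + 1 := Finset.mem_range.mp (Finset.mem_filter.mp hs).1
          omega
        · intro g _ _
          exact Finset.prod_nonneg fun x _ =>
            pow_nonneg (Real.rpow_nonneg (Nat.cast_nonneg _) _) _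
    _ ≤ ∏ p ∈ P, 1 / (1 - (p : ℝ) ^ c) := by
        refine Finset.prod_le_prod (fun p _ => Finset.sum_nonneg fun k _ =>
          pow_nonneg (Real.rpow_nonneg (Nat.cast_nonneg _) _) _) ?_
        intro p hp
        have hpprime : p.Prime := (Finset.mem_filter.mp hp).2.1
        set r : ℝ := (p : ℝ) ^ c with hr
        have hr0 : 0 ≤ r := Real.rpow_nonneg (Nat.cast_nonneg _) _
        have hr1 : r < 1 := Real.rpow_lt_one_of_one_lt_of_neg
          (by exact_mod_cast hpprime.one_lt) hcneg
        have h1r : 0 < 1 - r := by linarith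
        rw [le_div_iff₀ h1r]
        have hgs := geom_sum_mul r (N + 1)
        have hmul : (∑ k ∈ Finset.range (N + 1), r ^ k) * (1 - r) = 1 - r ^ (N + 1) := by
          linear_combination -hgs
        rw [hmul]
        have := pow_nonneg hr0 (N + 1)
        linarith
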